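/- Let (Q,R) be a gentle presentation and write H^m for the degree-m cohomology of the complex k(Γ∥B). The following are equivalent: (1) the set B is finite (equivalently, the algebra kQ/⟨R⟩ is finite-dimensional); (2) H^0 is finite-dimensional; (3) H^1 is finite-dimensional; (4) there is no cocomplete cycle in (Q,R). Moreover, when these hold, H^m is finite-dimensional for every m ≥ 0. -/

import Mathlib

/-!
Common framework: quivers, paths (as a start vertex together with a list of
composable arrows, listed in order of traversal, so that the paper's path
`c_m ⋯ c_1` corresponds to the list `[c_1, …, c_m]`), gentle and quadratic
monomial presentations, the cochain complex `k(Γ ∥ B)` and the chain complex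
`k(B ⊙ Γ)` of the paper.
-/

namespace GentleTT

structure Quiv where
  V : Type
  A : Type
  [fintV : Fintype V]
  [fintA : Fintype A]
  [decV : DecidableEq V]
  [decA : DecidableEq A]
  src : A → V
  tgt : A → V

attribute [instance] Quiv.fintV Quiv.fintA Quiv.decV Quiv.decA

/-- A "path datum": a start vertex together with the list of arrows traversed. -/
abbrev PathDat (Q : Quiv) := Q.V × List Q.A

def psrc (Q : Quiv) (p : PathDat Q) : Q.V := p.1

def ptgt (Q : Quiv) (p : PathDat Q) : Q.V := p.2.getLast?.elim p.1 Q.tgt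

def plen (Q : Quiv) (p : PathDat Q) : ℕ := p.2.length

/-- `p` is a genuine path: consecutive arrows compose, and the recorded start
vertex is the source of the first arrow (if any). -/
def Ok (Q : Quiv) (p : PathDat Q) : Prop :=
  p.2.Chain' (fun a b => Q.tgt a = Q.src b) ∧ ∀ a ∈ p.2.head?, Q.src a = p.1

/-- `p` is a path none of whose length-2 subpaths lies in `R`
(an element of the basis `B` of `kQ/⟨R⟩`). -/
def InB (Q : Quiv) (R : Set (Q.A × Q.A)) (p : PathDat Q) : Prop :=
  Ok Q p ∧ p.2.Chain' (fun a b => (a, b) ∉ R)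

/-- `p` is a path all of whose length-2 subpaths lie in `R` (an element of `Γ`). -/
def InG (Q : Quiv) (R : Set (Q.A × Q.A)) (p : PathDat Q) : Prop :=
  Ok Q p ∧ p.2.Chain' (fun a b => (a, b) ∈ R)

/-- Parallel paths: same source and same target. -/
def Par (Q : Quiv) (p q : PathDat Q) : Prop :=
  psrc Q p = psrc Q q ∧ ptgt Q p = ptgt Q q

/-- Antiparallel paths: `s(p) = t(q)` and `t(p) = s(q)`. -/
def AntiPar (Q : Quiv) (p q : PathDat Q) : Prop :=
  psrc Q p = ptgt Q q ∧ ptgt Q p = psrc Q q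

/-- A cycle: a path of positive length whose source equals its target. -/
def IsCycle (Q : Quiv) (p : PathDat Q) : Prop :=
  Ok Q p ∧ p.2 ≠ [] ∧ psrc Q p = ptgt Q p

/-- Rotation of a cycle: the paper's `rot (c_m ⋯ c_1) = c_{m-1} ⋯ c_1 c_m`
(the last arrow traversed becomes the first one traversed). -/
def rotP (Q : Quiv) (p : PathDat Q) : PathDat Q :=
  match p.2.getLast? with
  | none => p
  | some a => (Q.src a, a :: p.2.dropLast)

/-- Iterated rotation `rot^i`. -/
def rotI (Q : Quiv) (i : ℕ) (p : PathDat Q) : PathDat Q := (rotP Q)^[i] p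

def powL {α : Type} (l : List α) : ℕ → List α
  | 0 => []
  | n + 1 => l ++ powL l n

/-- The `n`-th power `p^n` of a (cyclic) path. -/
def powP (Q : Quiv) (p : PathDat Q) (n : ℕ) : PathDat Q := (p.1, powL p.2 n)

/-- A primitive cycle: a cycle that is not a proper power of another cycle. -/
def IsPrimitive (Q : Quiv) (p : PathDat Q) : Prop :=
  IsCycle Q p ∧ ∀ (q : PathDat Q) (n : ℕ), IsCycle Q q → 2 ≤ n → p ≠ powP Q q n

/-- The period of a cycle: the least `i ≥ 1` with `rot^i p = p`. -/
noncomputable def periodP (Q : Quiv) (p : PathDat Q) : ℕ :=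
  sInf {i : ℕ | 1 ≤ i ∧ rotI Q i p = p}

/-- Two cycles are conjugate (belong to the same circuit) if one is obtained
from the other by iterated rotation. -/
def RotEquiv (Q : Quiv) (p q : PathDat Q) : Prop := ∃ i : ℕ, rotI Q i p = q

/-- A cocomplete cycle: `p² ∈ B`. -/
def Cocomplete (Q : Quiv) (R : Set (Q.A × Q.A)) (p : PathDat Q) : Prop :=
  IsCycle Q p ∧ InB Q R (powP Q p 2)

/-- A complete cycle: `p² ∈ Γ`. -/
def Complete (Q : Quiv) (R : Set (Q.A × Q.A)) (p : PathDat Q) : Prop :=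
  IsCycle Q p ∧ InG Q R (powP Q p 2)

/-- `B`-maximal path: in `B` and not a proper subpath of another element of `B`. -/
def BMax (Q : Quiv) (R : Set (Q.A × Q.A)) (p : PathDat Q) : Prop :=
  InB Q R p ∧ ∀ q : PathDat Q, InB Q R q → p.2 <:+: q.2 → p.2 = q.2

/-- `Γ`-maximal path: in `Γ` and not a proper subpath of another element of `Γ`. -/
def GMax (Q : Quiv) (R : Set (Q.A × Q.A)) (p : PathDat Q) : Prop :=
  InG Q R p ∧ ∀ q : PathDat Q, InG Q R q → p.2 <:+: q.2 → p.2 = q.2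

def Adj (Q : Quiv) (v w : Q.V) : Prop :=
  ∃ a : Q.A, (Q.src a = v ∧ Q.tgt a = w) ∨ (Q.src a = w ∧ Q.tgt a = v)

/-- Connectedness of the underlying graph of the quiver. -/
def Connected (Q : Quiv) : Prop := ∀ v w : Q.V, Relation.ReflTransGen (Adj Q) v w

/-- A quadratic monomial presentation: the relations are paths of length 2. -/
def IsQuadMon (Q : Quiv) (R : Set (Q.A × Q.A)) : Prop :=
  ∀ r ∈ R, Q.tgt r.1 = Q.src r.2

/-- A gentle presentation. -/
structure IsGentle (Q : Quiv) (R : Set (Q.A × Q.A)) : Prop where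
  nonempty : Nonempty Q.V
  connected : Connected Q
  relComposable : ∀ r ∈ R, Q.tgt r.1 = Q.src r.2
  srcLe : ∀ v : Q.V, {a : Q.A | Q.src a = v}.ncard ≤ 2
  tgtLe : ∀ v : Q.V, {a : Q.A | Q.tgt a = v}.ncard ≤ 2
  uniqNotRelAfter : ∀ a : Q.A, {b : Q.A | Q.tgt a = Q.src b ∧ (a, b) ∉ R}.Subsingleton
  uniqNotRelBefore : ∀ a : Q.A, {c : Q.A | Q.tgt c = Q.src a ∧ (c, a) ∉ R}.Subsingleton
  uniqRelAfter : ∀ a : Q.A, {b : Q.A | Q.tgt a = Q.src b ∧ (a, b) ∈ R}.Subsingleton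
  uniqRelBefore : ∀ a : Q.A, {c : Q.A | Q.tgt c = Q.src a ∧ (c, a) ∈ R}.Subsingleton

/-- A spanning tree of the (finite, connected) quiver `Q`: a set of arrows
which connects all vertices and has exactly `|Q₀| - 1` elements. -/
def IsSpanningTree (Q : Quiv) (T : Set Q.A) : Prop :=
  (∀ v w : Q.V, Relation.ReflTransGen
      (fun x y => ∃ a ∈ T, (Q.src a = x ∧ Q.tgt a = y) ∨ (Q.src a = y ∧ Q.tgt a = x)) v w) ∧
  T.ncard + 1 = Fintype.card Q.V

/-- A set of representatives, one for each rotation class of cycles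
satisfying `Pred`. -/
def IsRepSet (Q : Quiv) (P : Set (PathDat Q)) (Pred : PathDat Q → Prop) : Prop :=
  (∀ p ∈ P, Pred p) ∧ ∀ q : PathDat Q, Pred q → ∃! p, p ∈ P ∧ RotEquiv Q q p

/-- `S` is a valid choice of the paper's set `Crep` for the predicate `Pred`
(e.g. cocompleteness, or completeness): it consists of all positive powers of a
chosen set of representatives of the rotation classes of primitive cycles
satisfying `Pred`. -/
def IsCrep (Q : Quiv) (S : Set (PathDat Q)) (Pred : PathDat Q → Prop) : Prop :=
  ∃ P : Set (PathDat Q),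
    IsRepSet Q P (fun p => IsPrimitive Q p ∧ Pred p) ∧
    S = {x | ∃ p ∈ P, ∃ n : ℕ, 1 ≤ n ∧ x = powP Q p n}

/-! ### The cochain complex `k(Γ ∥ B)` -/

/-- Membership in the degree-`m` basis `Γ_m ∥ B` of the cochain complex. -/
def GBmem (Q : Quiv) (R : Set (Q.A × Q.A)) (m : ℕ) (x : PathDat Q × PathDat Q) : Prop :=
  InG Q R x.1 ∧ plen Q x.1 = m ∧ InB Q R x.2 ∧ Par Q x.1 x.2

abbrev GB (Q : Quiv) (R : Set (Q.A × Q.A)) (m : ℕ) :=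
  {x : PathDat Q × PathDat Q // GBmem Q R m x}

/-- The degree-`m` component of the cochain complex `k(Γ ∥ B)`. -/
abbrev Coch (k : Type) [Field k] (Q : Quiv) (R : Set (Q.A × Q.A)) (m : ℕ) :=
  GB Q R m →₀ k

/-- The basis vector of `k(Γ_m ∥ B)` attached to a raw pair of path data
(and `0` if the pair is not in `Γ_m ∥ B`). -/
noncomputable def bv (k : Type) [Field k] (Q : Quiv) (R : Set (Q.A × Q.A)) (m : ℕ)
    (x : PathDat Q × PathDat Q) : Coch k Q R m := by
  classical
  exact if h : GBmem Q R m x then Finsupp.single (⟨x, h⟩ : GB Q R m) (1 : k) else 0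

/-- Extension on the left (in the paper's notation): `p ↦ b p`. -/
def extL (Q : Quiv) (b : Q.A) (p : PathDat Q) : PathDat Q := (p.1, p.2 ++ [b])

/-- Extension on the right (in the paper's notation): `p ↦ p a`. -/
def extR (Q : Quiv) (a : Q.A) (p : PathDat Q) : PathDat Q := (Q.src a, a :: p.2)

/-- The differential on a basis element:
`d^m (γ, α) = Σ_b (bγ, bα) - (-1)^m Σ_a (γa, αa)`. -/
noncomputable def dB (k : Type) [Field k] (Q : Quiv) (R : Set (Q.A × Q.A)) (m : ℕ)
    (x : GB Q R m) : Coch k Q R (m + 1) := by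
  classical
  exact
    (∑ b : Q.A,
      if h : GBmem Q R (m + 1) (extL Q b x.val.1, extL Q b x.val.2) then
        Finsupp.single (⟨_, h⟩ : GB Q R (m + 1)) (1 : k) else 0)
    - ((-1 : k) ^ m) •
      (∑ a : Q.A,
        if h : Q.tgt a = psrc Q x.val.1 ∧
            GBmem Q R (m + 1) (extR Q a x.val.1, extR Q a x.val.2) then
          Finsupp.single (⟨_, h.2⟩ : GB Q R (m + 1)) (1 : k) else 0)

/-- The differential `d^m : k(Γ_m ∥ B) → k(Γ_{m+1} ∥ B)`. -/
noncomputable def dLin (k : Type) [Field k] (Q : Quiv) (R : Set (Q.A × Q.A)) (m : ℕ) :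
    Coch k Q R m →ₗ[k] Coch k Q R (m + 1) :=
  Finsupp.linearCombination k (dB k Q R m)

/-- The element `𝟙 = Σ_{i ∈ Q₀} (e_i, e_i)` (placed in degree `m`; it is the
intended element when `m = 0`). -/
noncomputable def oneD (k : Type) [Field k] (Q : Quiv) (R : Set (Q.A × Q.A)) (m : ℕ) :
    Coch k Q R m :=
  ∑ i : Q.V, bv k Q R m ((i, []), (i, []))

/-- `⟨α⟩ = Σ_{i=0}^{r-1} (s(rot^i α), rot^i α)`, `r` the period of `α`. -/
noncomputable def cycB (k : Type) [Field k] (Q : Quiv) (R : Set (Q.A × Q.A)) (m : ℕ)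
    (α : PathDat Q) : Coch k Q R m :=
  ∑ i ∈ Finset.range (periodP Q α),
    bv k Q R m ((psrc Q (rotI Q i α), []), rotI Q i α)

/-- `⟨C⟩ = Σ_{i=0}^{r-1} (-1)^{i m} (rot^i C, s(rot^i C))`, `r` the period of `C`. -/
noncomputable def cycG (k : Type) [Field k] (Q : Quiv) (R : Set (Q.A × Q.A)) (m : ℕ)
    (C : PathDat Q) : Coch k Q R m :=
  ∑ i ∈ Finset.range (periodP Q C),
    ((-1 : k) ^ (i * m)) • bv k Q R m (rotI Q i C, (psrc Q (rotI Q i C), []))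

/-- The coboundary subspace in degree `m` (zero in degree `0`). -/
noncomputable def cobSp (k : Type) [Field k] (Q : Quiv) (R : Set (Q.A × Q.A)) :
    (m : ℕ) → Submodule k (Coch k Q R m)
  | 0 => ⊥
  | m + 1 => LinearMap.range (dLin k Q R m)

/-- The cocycle subspace in degree `m`. -/
noncomputable def cocSp (k : Type) [Field k] (Q : Quiv) (R : Set (Q.A × Q.A)) (m : ℕ) :
    Submodule k (Coch k Q R m) :=
  LinearMap.ker (dLin k Q R m)

/-- The degree-`m` cohomology `HH^m` of the complex `k(Γ ∥ B)` vanishes: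
every cocycle is a coboundary. -/
def CohomIsZero (k : Type) [Field k] (Q : Quiv) (R : Set (Q.A × Q.A)) (m : ℕ) : Prop :=
  cocSp k Q R m ≤ cobSp k Q R m

/-- The degree-`m` cohomology `HH^m` of the complex `k(Γ ∥ B)` is
finite-dimensional: there is a finite set of cocycles whose classes span it. -/
def CohomFinDim (k : Type) [Field k] (Q : Quiv) (R : Set (Q.A × Q.A)) (m : ℕ) : Prop :=
  ∃ G : Finset (Coch k Q R m), ↑G ⊆ (cocSp k Q R m : Set (Coch k Q R m)) ∧
    cocSp k Q R m ≤ cobSp k Q R m ⊔ Submodule.span k ↑G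

/-- The degree-`m` cohomology `HH^m` of the complex `k(Γ ∥ B)` has dimension at
most `n`: there are `n` cocycles whose classes span it. -/
def CohomDimLe (k : Type) [Field k] (Q : Quiv) (R : Set (Q.A × Q.A)) (m n : ℕ) : Prop :=
  ∃ G : Finset (Coch k Q R m), G.card ≤ n ∧
    ↑G ⊆ (cocSp k Q R m : Set (Coch k Q R m)) ∧
    cocSp k Q R m ≤ cobSp k Q R m ⊔ Submodule.span k ↑G

/-- `Gen` is a basis of the kernel of `d⁰`, i.e. it freely generates `HH⁰`. -/
def FreelyGeneratesKer0 (k : Type) [Field k] (Q : Quiv) (R : Set (Q.A × Q.A))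
    (Gen : Set (Coch k Q R 0)) : Prop :=
  (∀ x ∈ Gen, dLin k Q R 0 x = 0) ∧
  (∀ z : Coch k Q R 0, dLin k Q R 0 z = 0 → z ∈ Submodule.span k Gen) ∧
  LinearIndependent k (fun x : Gen => (x : Coch k Q R 0))

/-- The cohomology classes of the elements of `Gen` freely generate the
degree-`(m+1)` cohomology of `k(Γ ∥ B)`: all elements of `Gen` are cocycles,
every cocycle is congruent to an element of their span modulo coboundaries, no
nonzero element of their span is a coboundary, and `Gen` is linearly
independent. -/
def FreelyGeneratesCohom (k : Type) [Field k] (Q : Quiv) (R : Set (Q.A × Q.A)) (m : ℕ)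
    (Gen : Set (Coch k Q R (m + 1))) : Prop :=
  (∀ x ∈ Gen, dLin k Q R (m + 1) x = 0) ∧
  (∀ z : Coch k Q R (m + 1), dLin k Q R (m + 1) z = 0 →
      ∃ y : Coch k Q R m, z - dLin k Q R m y ∈ Submodule.span k Gen) ∧
  (∀ x ∈ Submodule.span k Gen, x ∈ LinearMap.range (dLin k Q R m) → x = 0) ∧
  LinearIndependent k (fun x : Gen => (x : Coch k Q R (m + 1)))

/-! ### The chain complex `k(B ⊙ Γ)` -/

/-- Membership in the degree-`m` basis `B ⊙ Γ_m` of the chain complex. -/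
def BGmem (Q : Quiv) (R : Set (Q.A × Q.A)) (m : ℕ) (x : PathDat Q × PathDat Q) : Prop :=
  InB Q R x.1 ∧ InG Q R x.2 ∧ plen Q x.2 = m ∧ AntiPar Q x.1 x.2

abbrev BGt (Q : Quiv) (R : Set (Q.A × Q.A)) (m : ℕ) :=
  {x : PathDat Q × PathDat Q // BGmem Q R m x}

/-- The degree-`m` component of the chain complex `k(B ⊙ Γ)`. -/
abbrev Chn (k : Type) [Field k] (Q : Quiv) (R : Set (Q.A × Q.A)) (m : ℕ) :=
  BGt Q R m →₀ k

/-- The basis vector of `k(B ⊙ Γ_m)` attached to a raw pair of path data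
(and `0` if the pair is not in `B ⊙ Γ_m`). -/
noncomputable def bw (k : Type) [Field k] (Q : Quiv) (R : Set (Q.A × Q.A)) (m : ℕ)
    (x : PathDat Q × PathDat Q) : Chn k Q R m := by
  classical
  exact if h : BGmem Q R m x then Finsupp.single (⟨x, h⟩ : BGt Q R m) (1 : k) else 0

/-- `l1(p)`: the last arrow of `p` (as a path of length one). -/
def l1P (Q : Quiv) (p : PathDat Q) : PathDat Q :=
  match p.2.getLast? with
  | none => p
  | some a => (Q.src a, [a])

/-- `l2(p)`: `p` with its last arrow removed. -/
def l2P (Q : Quiv) (p : PathDat Q) : PathDat Q := (p.1, p.2.dropLast)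

/-- `r1(p)`: `p` with its first arrow removed. -/
def r1P (Q : Quiv) (p : PathDat Q) : PathDat Q :=
  match p.2 with
  | [] => p
  | a :: l => (Q.tgt a, l)

/-- `r2(p)`: the first arrow of `p` (as a path of length one). -/
def r2P (Q : Quiv) (p : PathDat Q) : PathDat Q :=
  match p.2 with
  | [] => p
  | a :: _ => (Q.src a, [a])

/-- The raw first term `(α·l1(γ), l2(γ))` of the boundary of `(α, γ)`. -/
def d1raw (Q : Quiv) (x : PathDat Q × PathDat Q) : PathDat Q × PathDat Q :=
  match x.2.2.getLast? with
  | none => x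
  | some a => ((Q.src a, a :: x.1.2), (x.2.1, x.2.2.dropLast))

/-- The raw second term `(r2(γ)·α, r1(γ))` of the boundary of `(α, γ)`. -/
def d2raw (Q : Quiv) (x : PathDat Q × PathDat Q) : PathDat Q × PathDat Q :=
  match x.2.2 with
  | [] => x
  | c :: l => ((x.1.1, x.1.2 ++ [c]), (Q.tgt c, l))

/-- The boundary of a basis element:
`d_m (α, γ) = (α·l1(γ), l2(γ)) + (-1)^m (r2(γ)·α, r1(γ))` (in degree `m = m+1`),
where pairs whose first component is not in `B` are interpreted as `0`. -/
noncomputable def bdB (k : Type) [Field k] (Q : Quiv) (R : Set (Q.A × Q.A)) (m : ℕ)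
    (x : BGt Q R (m + 1)) : Chn k Q R m :=
  bw k Q R m (d1raw Q x.val) + ((-1 : k) ^ (m + 1)) • bw k Q R m (d2raw Q x.val)

/-- The boundary map `d_{m+1} : k(B ⊙ Γ_{m+1}) → k(B ⊙ Γ_m)`. -/
noncomputable def bd (k : Type) [Field k] (Q : Quiv) (R : Set (Q.A × Q.A)) (m : ℕ) :
    Chn k Q R (m + 1) →ₗ[k] Chn k Q R m :=
  Finsupp.linearCombination k (bdB k Q R m)

/-- The subspace of cycles in degree `m` (everything in degree `0`). -/
noncomputable def ZSp (k : Type) [Field k] (Q : Quiv) (R : Set (Q.A × Q.A)) :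
    (m : ℕ) → Submodule k (Chn k Q R m)
  | 0 => ⊤
  | m + 1 => LinearMap.ker (bd k Q R m)

/-- The subspace of boundaries in degree `m`. -/
noncomputable def BSp (k : Type) [Field k] (Q : Quiv) (R : Set (Q.A × Q.A)) (m : ℕ) :
    Submodule k (Chn k Q R m) :=
  LinearMap.range (bd k Q R m)

/-- The degree-`m` homology `HH_m` of the complex `k(B ⊙ Γ)` vanishes:
every cycle is a boundary. -/
def HomIsZero (k : Type) [Field k] (Q : Quiv) (R : Set (Q.A × Q.A)) (m : ℕ) : Prop :=
  ZSp k Q R m ≤ BSp k Q R m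

/-- The degree-`m` homology `HH_m` of the complex `k(B ⊙ Γ)` is
finite-dimensional: there is a finite set of cycles whose classes span it. -/
def HomFinDim (k : Type) [Field k] (Q : Quiv) (R : Set (Q.A × Q.A)) (m : ℕ) : Prop :=
  ∃ G : Finset (Chn k Q R m), ↑G ⊆ (ZSp k Q R m : Set (Chn k Q R m)) ∧
    ZSp k Q R m ≤ BSp k Q R m ⊔ Submodule.span k ↑G

/-- The concatenation `α γ` of an antiparallel pair (a cycle, or a trivial path). -/
def concatP (Q : Quiv) (x : PathDat Q × PathDat Q) : PathDat Q := (x.2.1, x.2.2 ++ x.1.2)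

/-- The degree-`m` component of the subcomplex `k(B ⊙ Γ)_C`, spanned by the
basis elements whose concatenation lies in the circuit (rotation class) of `c`. -/
noncomputable def Wsp (k : Type) [Field k] (Q : Quiv) (R : Set (Q.A × Q.A))
    (c : PathDat Q) (m : ℕ) : Submodule k (Chn k Q R m) :=
  Submodule.span k {z : Chn k Q R m |
    ∃ x : BGt Q R m, RotEquiv Q (concatP Q x.val) c ∧ z = Finsupp.single x (1 : k)}

/-- The boundaries of the subcomplex `k(B ⊙ Γ)_C` in degree `m`. -/
noncomputable def WB (k : Type) [Field k] (Q : Quiv) (R : Set (Q.A × Q.A))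
    (c : PathDat Q) (m : ℕ) : Submodule k (Chn k Q R m) :=
  Submodule.map (bd k Q R m) (Wsp k Q R c (m + 1))

/-- The cycles of the subcomplex `k(B ⊙ Γ)_C` in degree `m`. -/
noncomputable def WZ (k : Type) [Field k] (Q : Quiv) (R : Set (Q.A × Q.A))
    (c : PathDat Q) (m : ℕ) : Submodule k (Chn k Q R m) :=
  ZSp k Q R m ⊓ Wsp k Q R c m

/-- The degree-`m` homology of `k(B ⊙ Γ)_C` is one-dimensional, spanned by the
homology class of `v`. -/
def SubHomSpannedBy (k : Type) [Field k] (Q : Quiv) (R : Set (Q.A × Q.A))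
    (c : PathDat Q) (m : ℕ) (v : Chn k Q R m) : Prop :=
  v ∈ WZ k Q R c m ∧ v ∉ WB k Q R c m ∧
  ∀ z ∈ WZ k Q R c m, ∃ t : k, z - t • v ∈ WB k Q R c m

/-- `ĥ(c) = Σ_{i=0}^{r-1} (r1(rot^i c), r2(rot^i c))` (degree 1, for cocomplete cycles;
placed in degree `m`). -/
noncomputable def hCycR (k : Type) [Field k] (Q : Quiv) (R : Set (Q.A × Q.A)) (m : ℕ)
    (c : PathDat Q) : Chn k Q R m :=
  ∑ i ∈ Finset.range (periodP Q c),
    bw k Q R m (r1P Q (rotI Q i c), r2P Q (rotI Q i c))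

/-- `ĥ(c) = Σ_{i=0}^{r-1} (-1)^{(m+1) i} (s(rot^i c), rot^i c)` (degree `m`, for
complete cycles of length `m`). -/
noncomputable def hCycM (k : Type) [Field k] (Q : Quiv) (R : Set (Q.A × Q.A)) (m : ℕ)
    (c : PathDat Q) : Chn k Q R m :=
  ∑ i ∈ Finset.range (periodP Q c),
    ((-1 : k) ^ ((m + 1) * i)) • bw k Q R m ((psrc Q (rotI Q i c), []), rotI Q i c)

/-- The homology classes of the elements of `Gen` freely generate the degree-`m`
homology of `k(B ⊙ Γ)`. -/
def FreelyGeneratesHom (k : Type) [Field k] (Q : Quiv) (R : Set (Q.A × Q.A)) (m : ℕ)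
    (Gen : Set (Chn k Q R m)) : Prop :=
  (∀ x ∈ Gen, x ∈ ZSp k Q R m) ∧
  (∀ z ∈ ZSp k Q R m, ∃ y : Chn k Q R (m + 1), z - bd k Q R m y ∈ Submodule.span k Gen) ∧
  (∀ x ∈ Submodule.span k Gen, x ∈ LinearMap.range (bd k Q R m) → x = 0) ∧
  LinearIndependent k (fun x : Gen => (x : Chn k Q R m))

/-! ### Auxiliary development -/

section AuxCombinatorics

variable {Q : Quiv} {R : Set (Q.A × Q.A)}

/-- Both chain conditions defining membership of a list in `B`. -/
def GoodL (Q : Quiv) (R : Set (Q.A × Q.A)) (u : List Q.A) : Prop :=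
  u.Chain' (fun a b => Q.tgt a = Q.src b) ∧ u.Chain' (fun a b => (a, b) ∉ R)

lemma goodL_infix {u s : List Q.A} (h : GoodL Q R u) (hs : s <:+: u) : GoodL Q R s :=
  ⟨h.1.infix hs, h.2.infix hs⟩

lemma inB_iff {v : Q.V} {u : List Q.A} :
    InB Q R (v, u) ↔ GoodL Q R u ∧ ∀ a ∈ u.head?, Q.src a = v := by
  unfold InB Ok GoodL
  tauto

lemma inB_iff' {p : PathDat Q} :
    InB Q R p ↔ GoodL Q R p.2 ∧ ∀ a ∈ p.2.head?, Q.src a = p.1 := by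
  obtain ⟨v, u⟩ := p; exact inB_iff

lemma powL_length {α : Type} (l : List α) (n : ℕ) : (powL l n).length = n * l.length := by
  induction n with
  | zero => simp [powL]
  | succ n ih => simp [powL, ih, Nat.succ_mul]; ring

lemma powL_add {α : Type} (l : List α) (a b : ℕ) :
    powL l (a + b) = powL l a ++ powL l b := by
  induction a with
  | zero => simp [powL]
  | succ a ih => rw [Nat.succ_add]; simp [powL, ih]

lemma head?_powL {α : Type} {l : List α} {hd : α} (h : l.head? = some hd) {n : ℕ}
    (hn : 1 ≤ n) : (powL l n).head? = some hd := by
  cases n with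
  | zero => omega
  | succ n =>
    show (l ++ powL l n).head? = some hd
    rw [List.head?_append, h]; rfl

lemma chain'_powL {α : Type} {r : α → α → Prop} {l : List α} {hd : α}
    (h : (l ++ [hd]).Chain' r) (hh : l.head? = some hd) :
    ∀ n, (powL l n).Chain' r := by
  intro n
  induction n with
  | zero => simp [powL, List.Chain']
  | succ n ih =>
    show (l ++ powL l n).Chain' r
    rw [show (l ++ powL l n).Chain' r ↔ _ from List.isChain_append]
    refine ⟨h.prefix (List.prefix_append _ _), ih, ?_⟩
    intro x hx y hy
    have hjun := (List.isChain_append.mp h).2.2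
    cases n with
    | zero => simp [powL] at hy
    | succ n =>
      rw [head?_powL hh (by omega)] at hy
      obtain rfl : hd = y := by simpa using hy
      exact hjun x hx hd rfl

end AuxCombinatorics
section AuxCocomplete

variable {Q : Quiv} {R : Set (Q.A × Q.A)}

lemma coc_ne_nil {p : PathDat Q} (hc : Cocomplete Q R p) : p.2 ≠ [] := hc.1.2.1

lemma coc_head_src {p : PathDat Q} (hc : Cocomplete Q R p) :
    ∀ a ∈ p.2.head?, Q.src a = p.1 := hc.1.1.2

lemma coc_goodL_sq {p : PathDat Q} (hc : Cocomplete Q R p) : GoodL Q R (p.2 ++ p.2) := by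
  have h := hc.2
  have : powP Q p 2 = (p.1, p.2 ++ p.2) := by
    show (p.1, powL p.2 2) = _
    simp [powL]
  rw [this, inB_iff] at h
  exact h.1

lemma coc_goodL {p : PathDat Q} (hc : Cocomplete Q R p) : GoodL Q R p.2 :=
  goodL_infix (coc_goodL_sq hc) ⟨[], p.2, by simp⟩

lemma coc_goodL_hd {p : PathDat Q} (hc : Cocomplete Q R p) {hd : Q.A}
    (hh : p.2.head? = some hd) : GoodL Q R (p.2 ++ [hd]) := by
  refine goodL_infix (coc_goodL_sq hc) ⟨[], p.2.tail, ?_⟩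
  simp [List.append_assoc]
  rw [List.cons_head?_tail hh]

lemma coc_goodL_pow {p : PathDat Q} (hc : Cocomplete Q R p) (n : ℕ) :
    GoodL Q R (powL p.2 n) := by
  have hh : p.2.head? = some (p.2.head (coc_ne_nil hc)) := List.head?_eq_head _
  have hG := coc_goodL_hd hc hh
  exact ⟨chain'_powL hG.1 hh n, chain'_powL hG.2 hh n⟩

lemma ptgt_some {p : PathDat Q} {a : Q.A} (h : p.2.getLast? = some a) :
    ptgt Q p = Q.tgt a := by
  unfold ptgt; rw [h]; rfl

lemma coc_tgt_last {p : PathDat Q} (hc : Cocomplete Q R p) :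
    Q.tgt (p.2.getLast (coc_ne_nil hc)) = p.1 := by
  have h := hc.1.2.2
  rw [ptgt_some (List.getLast?_eq_getLast (coc_ne_nil hc))] at h
  exact h.symm

lemma getLast?_powL {α : Type} {l : List α} {n : ℕ} (hn : 1 ≤ n) :
    (powL l n).getLast? = l.getLast? := by
  induction n with
  | zero => omega
  | succ n ih =>
    show (l ++ powL l n).getLast? = _
    rw [List.getLast?_append]
    cases n with
    | zero => simp [powL]
    | succ n =>
      rw [ih (by omega)]
      cases h : l.getLast? with
      | none => simp
      | some a => simp

/-- Positive powers of a cocomplete cycle are cocomplete. -/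
lemma coc_powP {p : PathDat Q} (hc : Cocomplete Q R p) {n : ℕ} (hn : 1 ≤ n) :
    Cocomplete Q R (p.1, powL p.2 n) := by
  have hne : powL p.2 n ≠ [] := by
    intro h
    have := powL_length p.2 n
    rw [h] at this
    have h2 := List.length_pos_iff.mpr (coc_ne_nil hc)
    simp at this
    rcases this with h | h
    · omega
    · exact coc_ne_nil hc h
  have hhd : (powL p.2 n).head? = p.2.head? := by
    have := List.head?_eq_head (coc_ne_nil hc)
    rw [head?_powL this hn, this]
  constructor
  · refine ⟨⟨(coc_goodL_pow hc n).1, ?_⟩, hne, ?_⟩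
    · intro a ha
      rw [hhd] at ha
      exact coc_head_src hc a ha
    · show p.1 = ptgt Q (p.1, powL p.2 n)
      rw [ptgt_some (p := (p.1, powL p.2 n)) (by
        show (powL p.2 n).getLast? = _
        rw [getLast?_powL hn]
        exact List.getLast?_eq_getLast (coc_ne_nil hc))]
      exact (coc_tgt_last hc).symm
  · have hlist : powL (powL p.2 n) 2 = powL p.2 (n + n) := by
      rw [powL_add]; simp [powL]
    show InB Q R (p.1, powL (powL p.2 n) 2)
    rw [hlist, inB_iff]
    refine ⟨coc_goodL_pow hc (n+n), ?_⟩
    intro a ha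
    rw [head?_powL (List.head?_eq_head (coc_ne_nil hc)) (by omega)] at ha
    obtain rfl : p.2.head (coc_ne_nil hc) = a := by simpa using ha
    exact coc_head_src hc _ (List.head?_eq_head _)

lemma rotP_eq {p : PathDat Q} {a : Q.A} (h : p.2.getLast? = some a) :
    rotP Q p = (Q.src a, a :: p.2.dropLast) := by
  unfold rotP; rw [h]

lemma rotP_nil {p : PathDat Q} (h : p.2 = []) : rotP Q p = p := by
  unfold rotP
  rw [List.getLast?_eq_none_iff.mpr h]

lemma rotP_length (p : PathDat Q) : (rotP Q p).2.length = p.2.length := by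
  cases h : p.2.getLast? with
  | none => rw [rotP_nil (List.getLast?_eq_none_iff.mp h)]
  | some a =>
    have hne : p.2 ≠ [] := by
      intro he; rw [List.getLast?_eq_none_iff.mpr he] at h; cases h
    rw [rotP_eq h]
    have := List.length_pos_iff.mpr hne
    simp [List.length_dropLast]
    omega

/-- Rotation preserves cocompleteness. -/
lemma coc_rot {p : PathDat Q} (hc : Cocomplete Q R p) : Cocomplete Q R (rotP Q p) := by
  have hne := coc_ne_nil hc
  set a := p.2.getLast hne with ha
  set d := p.2.dropLast with hd
  have key : d ++ [a] = p.2 := List.dropLast_append_getLast hne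
  have hrot : rotP Q p = (Q.src a, a :: d) := rotP_eq (List.getLast?_eq_getLast hne)
  have hsq : GoodL Q R ((a :: d) ++ (a :: d)) := by
    refine goodL_infix (coc_goodL_pow hc 3) ⟨d, [a], ?_⟩
    have h3 : powL p.2 3 = p.2 ++ (p.2 ++ (p.2 ++ [])) := rfl
    rw [h3, ← key]
    simp
  have hglast : (a :: d).getLast? = some ((a :: d).getLast (by simp)) :=
    List.getLast?_eq_getLast (by simp)
  have hjun : Q.tgt ((a :: d).getLast (by simp)) = Q.src a := by
    have := (List.isChain_append.mp hsq.1).2.2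
    exact this _ hglast a rfl
  rw [hrot]
  constructor
  · refine ⟨⟨hsq.1.prefix (List.prefix_append _ _), ?_⟩, by simp, ?_⟩
    · intro x hx
      obtain rfl : a = x := by simpa using hx
      rfl
    · show Q.src a = ptgt Q (Q.src a, a :: d)
      rw [ptgt_some (p := (Q.src a, a :: d)) hglast, hjun]
  · show InB Q R (Q.src a, powL (a :: d) 2)
    have : powL (a :: d) 2 = (a :: d) ++ (a :: d) := by simp [powL]
    rw [this, inB_iff]
    refine ⟨hsq, ?_⟩
    intro x hx
    obtain rfl : a = x := by simpa using hx
    rfl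

lemma rotI_coc {p : PathDat Q} (hc : Cocomplete Q R p) (j : ℕ) :
    Cocomplete Q R (rotI Q j p) := by
  induction j with
  | zero => exact hc
  | succ j ih =>
    rw [rotI, Function.iterate_succ_apply']
    exact coc_rot ih

lemma rotI_length (p : PathDat Q) (j : ℕ) : (rotI Q j p).2.length = p.2.length := by
  induction j with
  | zero => rfl
  | succ j ih => rw [rotI, Function.iterate_succ_apply']; rw [rotP_length]; exact ih

end AuxCocomplete
section AuxOrbit

variable {Q : Quiv} {R : Set (Q.A × Q.A)}

/-- Rotating a path `length`-many times returns it (only the head-source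
condition is needed). -/
lemma rot_full {v : Q.V} {u : List Q.A} (hu : u ≠ [])
    (hsrc : ∀ a ∈ u.head?, Q.src a = v) : rotI Q u.length (v, u) = (v, u) := by
  have key : ∀ j, j ≤ u.length → rotI Q j (v, u) =
      (((u.drop (u.length - j)).head?).elim v Q.src,
        u.drop (u.length - j) ++ u.take (u.length - j)) := by
    intro j hj
    induction j with
    | zero => simp [rotI]
    | succ j ih =>
      have hj' : j ≤ u.length := by omega
      obtain ⟨t, ht⟩ : ∃ t, u.length - j = t + 1 := ⟨u.length - j - 1, by omega⟩
      have htlt : t < u.length := by omega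
      have htake : u.take (t+1) = u.take t ++ [u[t]] := by
        rw [List.take_succ, List.getElem?_eq_getElem htlt]
        rfl
      have hdrop : u.drop t = u[t] :: u.drop (t+1) := List.drop_eq_getElem_cons htlt
      rw [rotI, Function.iterate_succ_apply', ← rotI, ih hj', ht]
      have hcur : u.drop (t+1) ++ u.take (t+1) = (u.drop (t+1) ++ u.take t) ++ [u[t]] := by
        rw [htake, List.append_assoc]
      have hlast : (u.drop (t+1) ++ u.take (t+1)).getLast? = some u[t] := by
        rw [hcur, List.getLast?_concat]
      rw [rotP_eq (p := (_, u.drop (t+1) ++ u.take (t+1))) hlast]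
      have hdl : (u.drop (t+1) ++ u.take (t+1)).dropLast = u.drop (t+1) ++ u.take t := by
        rw [hcur, List.dropLast_concat]
      rw [hdl]
      have harith : u.length - (j+1) = t := by omega
      rw [harith, hdrop]
      constructor <;> simp
  have := key u.length le_rfl
  simp at this
  rw [this]
  have hh : u.head? = some (u.head hu) := List.head?_eq_head hu
  rw [hh]
  simp [hsrc _ hh]

/-- The rotation orbit of a path datum. -/
def OrbS (Q : Quiv) (q : PathDat Q) : Set (PathDat Q) := {w | ∃ j, rotI Q j q = w}

lemma orb_self (q : PathDat Q) : q ∈ OrbS Q q := ⟨0, rfl⟩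

lemma orb_rot {q w : PathDat Q} (h : w ∈ OrbS Q q) : rotP Q w ∈ OrbS Q q := by
  obtain ⟨j, rfl⟩ := h
  exact ⟨j + 1, by rw [rotI, Function.iterate_succ_apply']; rfl⟩

lemma orb_coc {q w : PathDat Q} (hq : Cocomplete Q R q) (h : w ∈ OrbS Q q) :
    Cocomplete Q R w := by
  obtain ⟨j, rfl⟩ := h; exact rotI_coc hq j

lemma orb_len {q w : PathDat Q} (h : w ∈ OrbS Q q) : w.2.length = q.2.length := by
  obtain ⟨j, rfl⟩ := h; exact rotI_length q j

/-- A path datum whose rotation lies in the orbit of a cocomplete cycle lies in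
the orbit itself. -/
lemma orb_pre {q B : PathDat Q} (hq : Cocomplete Q R q) (hB2 : B.2 ≠ [])
    (hsrc : ∀ a ∈ B.2.head?, Q.src a = B.1) (hrot : rotP Q B ∈ OrbS Q q) :
    B ∈ OrbS Q q := by
  obtain ⟨j, hj⟩ := hrot
  have hL : 1 ≤ B.2.length := List.length_pos_iff.mpr hB2
  have hfull : rotI Q B.2.length B = B := by
    have := rot_full (v := B.1) (u := B.2) hB2 hsrc
    simpa using this
  refine ⟨(B.2.length - 1) + j, ?_⟩
  have hsplit : rotI Q (B.2.length - 1 + j) q = (rotP Q)^[B.2.length - 1] (rotI Q j q) :=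
    Function.iterate_add_apply _ _ _ _
  rw [hsplit, hj]
  have : (rotP Q)^[B.2.length - 1] (rotP Q B) = rotI Q B.2.length B := by
    show _ = (rotP Q)^[B.2.length] B
    rw [← Function.iterate_succ_apply]
    congr 1
    omega
  rw [this, hfull]

lemma pathDat_len_fin (L : ℕ) : {w : PathDat Q | w.2.length = L}.Finite := by
  have hsub : {w : PathDat Q | w.2.length = L} ⊆
      (Set.univ : Set Q.V) ×ˢ {u : List Q.A | u.length = L} := fun w hw => ⟨trivial, hw⟩
  exact (Set.finite_univ.prod (List.finite_length_eq _ L)).subset hsub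

lemma orb_fin (q : PathDat Q) : (OrbS Q q).Finite :=
  (pathDat_len_fin q.2.length).subset (fun _ hw => orb_len hw)

lemma orb_head_src {q w : PathDat Q} (hq : Cocomplete Q R q) (h : w ∈ OrbS Q q) :
    ∀ a ∈ w.2.head?, Q.src a = w.1 := (orb_coc hq h).1.1.2

lemma orb_rot_injOn {q : PathDat Q} (hq : Cocomplete Q R q) :
    Set.InjOn (rotP Q) (OrbS Q q) := by
  intro w1 h1 w2 h2 heq
  have hn1 := coc_ne_nil (orb_coc hq h1)
  have hn2 := coc_ne_nil (orb_coc hq h2)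
  rw [rotP_eq (List.getLast?_eq_getLast hn1), rotP_eq (List.getLast?_eq_getLast hn2)]
    at heq
  have h2' : w1.2.getLast hn1 = w2.2.getLast hn2 ∧ w1.2.dropLast = w2.2.dropLast := by
    have := congrArg Prod.snd heq
    simp at this
    exact this
  have hlist : w1.2 = w2.2 := by
    rw [← List.dropLast_append_getLast hn1, ← List.dropLast_append_getLast hn2,
      h2'.1, h2'.2]
  have hv : w1.1 = w2.1 := by
    have e0 : w2.2.head? = some (w1.2.head hn1) := by
      rw [← hlist]
      exact List.head?_eq_head hn1
    rw [List.head?_eq_head hn2] at e0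
    have e3 : w2.2.head hn2 = w1.2.head hn1 := by injection e0
    rw [← orb_head_src hq h1 _ (List.head?_eq_head hn1),
        ← orb_head_src hq h2 _ (List.head?_eq_head hn2), e3]
  exact Prod.ext hv hlist

/-- Summing a function against the rotation of the orbit equals summing over
the orbit. -/
lemma sum_rot_orbit {M : Type} [AddCommMonoid M] {q : PathDat Q}
    (hq : Cocomplete Q R q) (f : PathDat Q → M) :
    ∑ w ∈ (orb_fin q).toFinset, f (rotP Q w) = ∑ w ∈ (orb_fin q).toFinset, f w := by
  classical
  have hinj : Set.InjOn (rotP Q) ↑(orb_fin q).toFinset := by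
    intro a ha b hb hab
    refine orb_rot_injOn hq ?_ ?_ hab <;>
      rw [← Set.Finite.mem_toFinset (orb_fin q)]
    · exact ha
    · exact hb
  have hsub : (orb_fin q).toFinset.image (rotP Q) ⊆ (orb_fin q).toFinset := by
    intro x hx
    rw [Finset.mem_image] at hx
    obtain ⟨w, hw, rfl⟩ := hx
    rw [Set.Finite.mem_toFinset] at hw ⊢
    exact orb_rot hw
  have himg : (orb_fin q).toFinset.image (rotP Q) = (orb_fin q).toFinset :=
    Finset.eq_of_subset_of_card_le hsub (le_of_eq (Finset.card_image_of_injOn hinj).symm)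
  calc ∑ w ∈ (orb_fin q).toFinset, f (rotP Q w)
      = ∑ x ∈ (orb_fin q).toFinset.image (rotP Q), f x :=
        (Finset.sum_image (fun a ha b hb h =>
          hinj (Finset.mem_coe.mpr ha) (Finset.mem_coe.mpr hb) h)).symm
    _ = ∑ w ∈ (orb_fin q).toFinset, f w := by rw [himg]

end AuxOrbit
section AuxCochain

variable {Q : Quiv} {R : Set (Q.A × Q.A)} {k : Type} [Field k]

lemma bv_pos {m : ℕ} {y : PathDat Q × PathDat Q} (h : GBmem Q R m y) :
    bv k Q R m y = Finsupp.single (⟨y, h⟩ : GB Q R m) 1 := by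
  unfold bv
  exact dif_pos h

lemma bv_neg {m : ℕ} {y : PathDat Q × PathDat Q} (h : ¬ GBmem Q R m y) :
    bv k Q R m y = 0 := by
  unfold bv
  exact dif_neg h

/-- The coefficient-extraction functional at a raw parallel pair. -/
noncomputable def coeffAt (k : Type) [Field k] (Q : Quiv) (R : Set (Q.A × Q.A)) (m : ℕ)
    (x : PathDat Q × PathDat Q) : Coch k Q R m →ₗ[k] k := by
  classical
  exact if h : GBmem Q R m x then Finsupp.lapply ⟨x, h⟩ else 0

lemma coeffAt_single {m : ℕ} {x y : PathDat Q × PathDat Q} (hy : GBmem Q R m y) :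
    coeffAt k Q R m x (Finsupp.single (⟨y, hy⟩ : GB Q R m) 1) = if x = y then 1 else 0 := by
  classical
  unfold coeffAt
  by_cases hx : GBmem Q R m x
  · rw [dif_pos hx]
    show (Finsupp.single (⟨y, hy⟩ : GB Q R m) (1:k)) ⟨x, hx⟩ = _
    rw [Finsupp.single_apply]
    by_cases h : x = y
    · subst h
      simp
    · rw [if_neg (fun he => h (congrArg Subtype.val he).symm), if_neg h]
  · rw [dif_neg hx, if_neg (fun he : x = y => hx (by rw [he]; exact hy))]
    rfl

open scoped Classical in
lemma coeffAt_bv {m : ℕ} {x y : PathDat Q × PathDat Q} :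
    coeffAt k Q R m x (bv k Q R m y) = if GBmem Q R m y ∧ x = y then (1:k) else 0 := by
  by_cases hy : GBmem Q R m y
  · rw [bv_pos hy, coeffAt_single hy]
    by_cases hxy : x = y <;> simp [hy, hxy]
  · rw [bv_neg hy, map_zero]
    simp [hy]

lemma coeffAt_dite {m : ℕ} (x y : PathDat Q × PathDat Q) (C : Prop) [inst : Decidable C]
    (f : C → GBmem Q R m y) :
    coeffAt k Q R m x (if h : C then Finsupp.single (⟨y, f h⟩ : GB Q R m) (1:k) else 0)
      = if C ∧ x = y then 1 else 0 := by
  by_cases hC : C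
  · rw [dif_pos hC, coeffAt_single (f hC)]
    by_cases hxy : x = y <;> simp [hC, hxy]
  · rw [dif_neg hC]
    simp [hC]

lemma dLin_bv {m : ℕ} {y : PathDat Q × PathDat Q} (h : GBmem Q R m y) :
    dLin k Q R m (bv k Q R m y) = dB k Q R m ⟨y, h⟩ := by
  rw [bv_pos h]
  unfold dLin
  rw [Finsupp.linearCombination_single, one_smul]

/-- The next extension of a (rotated) cocomplete cycle: the degree-one pair
`(first arrow, cycle followed by its first arrow)`. -/
def nextExt (Q : Quiv) (w : PathDat Q) : PathDat Q × PathDat Q :=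
  match w.2 with
  | [] => (w, w)
  | a :: t => ((w.1, [a]), (w.1, (a :: t) ++ [a]))

lemma nextExt_eq {w : PathDat Q} {a : Q.A} {t : List Q.A} (h : w.2 = a :: t) :
    nextExt Q w = ((w.1, [a]), (w.1, (a :: t) ++ [a])) := by
  obtain ⟨v, u⟩ := w
  simp only at h
  subst h
  rfl

lemma zmem {w : PathDat Q} (hw : Cocomplete Q R w) :
    GBmem Q R 0 ((w.1, ([] : List Q.A)), w) := by
  refine ⟨⟨⟨List.isChain_nil, by simp⟩, List.isChain_nil⟩, rfl, ?_, rfl, ?_⟩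
  · rw [inB_iff']
    exact ⟨coc_goodL hw, coc_head_src hw⟩
  · exact hw.1.2.2

lemma nextExt_mem {w : PathDat Q} (hw : Cocomplete Q R w) :
    GBmem Q R 1 (nextExt Q w) := by
  obtain ⟨a, t, h⟩ : ∃ a t, w.2 = a :: t := by
    cases hw2 : w.2 with
    | nil => exact absurd hw2 (coc_ne_nil hw)
    | cons a t => exact ⟨a, t, rfl⟩
  have hh : w.2.head? = some a := by rw [h]; rfl
  have hsrc : Q.src a = w.1 := coc_head_src hw a hh
  rw [nextExt_eq h]
  refine ⟨⟨⟨List.isChain_singleton a, ?_⟩, List.isChain_singleton a⟩, rfl, ?_, rfl, ?_⟩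
  · intro x hx
    obtain rfl : a = x := by simpa using hx
    exact hsrc
  · rw [inB_iff]
    constructor
    · have := coc_goodL_hd hw hh
      rwa [h] at this
    · intro x hx
      obtain rfl : a = x := by simpa using hx
      exact hsrc
  · show ptgt Q (w.1, [a]) = ptgt Q (w.1, (a :: t) ++ [a])
    unfold ptgt
    rw [List.getLast?_concat]
    simp

lemma nextExt_inj {w w' : PathDat Q} (hw : w.2 ≠ []) (hw' : w'.2 ≠ [])
    (h : nextExt Q w = nextExt Q w') : w = w' := by
  obtain ⟨v, u⟩ := w
  obtain ⟨v', u'⟩ := w'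
  cases u with
  | nil => simp at hw
  | cons a t =>
    cases u' with
    | nil => simp at hw'
    | cons a' t' =>
      rw [nextExt_eq (w := (v, a :: t)) rfl, nextExt_eq (w := (v', a' :: t')) rfl] at h
      simp only [Prod.mk.injEq] at h
      obtain ⟨⟨hv, ha⟩, -, h2⟩ := h
      obtain rfl : a = a' := by simpa using ha
      subst hv
      simp only [List.cons_append, List.cons.injEq, true_and] at h2
      have : t = t' := List.append_cancel_right h2
      rw [this]

end AuxCochain
section AuxDegreeZero

variable {Q : Quiv} {R : Set (Q.A × Q.A)} {k : Type} [Field k]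

lemma dB_coc (hg : IsGentle Q R) {w : PathDat Q} (hw : Cocomplete Q R w) :
    dB k Q R 0 ⟨((w.1, ([] : List Q.A)), w), zmem hw⟩
      = bv k Q R 1 (nextExt Q w) - bv k Q R 1 (nextExt Q (rotP Q w)) := by
  obtain ⟨a0, t, hwl⟩ : ∃ a t, w.2 = a :: t := by
    cases hx : w.2 with
    | nil => exact absurd hx (coc_ne_nil hw)
    | cons a t => exact ⟨a, t, rfl⟩
  have hh : w.2.head? = some a0 := by rw [hwl]; rfl
  have hsrc : Q.src a0 = w.1 := coc_head_src hw a0 hh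
  have hne := coc_ne_nil hw
  set aL := w.2.getLast hne with haL
  have hgl : w.2.getLast? = some aL := List.getLast?_eq_getLast hne
  have hsq := coc_goodL_sq hw
  have hjun1 : Q.tgt aL = Q.src a0 := (List.isChain_append.mp hsq.1).2.2 _ hgl _ hh
  have hjun2 : (aL, a0) ∉ R := (List.isChain_append.mp hsq.2).2.2 _ hgl _ hh
  have hrot : rotP Q w = (Q.src aL, aL :: w.2.dropLast) := rotP_eq hgl
  unfold dB
  dsimp only
  rw [pow_zero, one_smul]
  congr 1
  · -- positive part
    rw [Fintype.sum_eq_single a0 ?_]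
    · have hpair : (extL Q a0 (w.1, ([] : List Q.A)), extL Q a0 w) = nextExt Q w := by
        rw [nextExt_eq hwl]
        unfold extL
        rw [← hwl]
        rfl
      rw [hpair, bv_pos (nextExt_mem hw), dif_pos (nextExt_mem hw)]
    · intro b hb
      rw [dif_neg]
      intro hmem
      have hinb : InB Q R (w.1, w.2 ++ [b]) := hmem.2.2.1
      rw [inB_iff] at hinb
      have hj1 : Q.tgt aL = Q.src b := (List.isChain_append.mp hinb.1.1).2.2 _ hgl _ rfl
      have hj2 : (aL, b) ∉ R := (List.isChain_append.mp hinb.1.2).2.2 _ hgl _ rfl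
      exact hb (hg.uniqNotRelAfter aL ⟨hj1, hj2⟩ ⟨hjun1, hjun2⟩)
  · -- negative part
    rw [Fintype.sum_eq_single aL ?_]
    · have hpair : (extR Q aL (w.1, ([] : List Q.A)), extR Q aL w)
          = nextExt Q (rotP Q w) := by
        rw [nextExt_eq (w := rotP Q w) (by rw [hrot])]
        unfold extR
        rw [hrot]
        refine Prod.ext rfl (Prod.ext rfl ?_)
        show aL :: w.2 = (aL :: w.2.dropLast) ++ [aL]
        conv_lhs => rw [← List.dropLast_append_getLast hne, ← haL]
        simp
      have hcond : Q.tgt aL = psrc Q (w.1, ([] : List Q.A)) ∧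
          GBmem Q R 1 (extR Q aL (w.1, ([] : List Q.A)), extR Q aL w) := by
        constructor
        · exact coc_tgt_last hw
        · rw [hpair]
          exact nextExt_mem (coc_rot hw)
      rw [dif_pos hcond, bv_pos (nextExt_mem (coc_rot hw))]
      congr 1
      exact Subtype.ext hpair
    · intro a ha
      rw [dif_neg]
      rintro ⟨-, hmem⟩
      have hinb : InB Q R (Q.src a, a :: w.2) := hmem.2.2.1
      rw [inB_iff, hwl] at hinb
      have hj1 : Q.tgt a = Q.src a0 := (List.isChain_cons_cons.mp hinb.1.1).1
      have hj2 : (a, a0) ∉ R := (List.isChain_cons_cons.mp hinb.1.2).1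
      exact ha (hg.uniqNotRelBefore a0 ⟨hj1, hj2⟩ ⟨hjun1, hjun2⟩)

end AuxDegreeZero

section AuxContra

variable {Q : Quiv} {R : Set (Q.A × Q.A)} {k : Type} [Field k]

/-- Abstract nonsense: an infinite "dual family" of cocycles kills finite
dimensionality of cohomology. -/
lemma contra {m : ℕ} (z : ℕ → Coch k Q R m) (φ : ℕ → (Coch k Q R m →ₗ[k] k))
    (hz : ∀ n, z n ∈ cocSp k Q R m)
    (hφc : ∀ n w, w ∈ cobSp k Q R m → φ n w = 0)
    (hδ : ∀ n n', φ n (z n') = if n = n' then 1 else 0) :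
    ¬ CohomFinDim k Q R m := by
  classical
  rintro ⟨G, hGsub, hle⟩
  have hdec : ∀ n, ∃ g ∈ Submodule.span k (G : Set (Coch k Q R m)),
      z n - g ∈ cobSp k Q R m := by
    intro n
    obtain ⟨c, hc, g, hgmem, hsum⟩ := Submodule.mem_sup.mp (hle (hz n))
    refine ⟨g, hgmem, ?_⟩
    rw [← hsum]
    simpa using hc
  choose g hgmem hrem using hdec
  have hφg : ∀ i j : ℕ, φ i (g j) = if i = j then 1 else 0 := by
    intro i j
    have h1 := hφc i _ (hrem j)
    rw [map_sub, sub_eq_zero] at h1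
    rw [← h1, hδ]
  haveI : FiniteDimensional k (Submodule.span k (G : Set (Coch k Q R m))) :=
    FiniteDimensional.span_of_finite k G.finite_toSet
  set N := G.card with hN
  set Φ : Coch k Q R m →ₗ[k] (Fin (N+1) → k) :=
    LinearMap.pi (fun i : Fin (N+1) => φ i) with hΦ
  have himg : ∀ i : Fin (N+1), Pi.single (M := fun _ : Fin (N+1) => k) i 1 ∈
      Submodule.map Φ (Submodule.span k (G : Set (Coch k Q R m))) := by
    intro i
    refine ⟨g i, hgmem i, ?_⟩
    ext j
    rw [hΦ, LinearMap.pi_apply, hφg, Pi.single_apply]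
    by_cases h : j = i
    · subst h
      simp
    · rw [if_neg (by simpa [Fin.val_eq_val] using h), if_neg h]
  have htop : Submodule.map Φ (Submodule.span k (G : Set (Coch k Q R m))) = ⊤ := by
    rw [eq_top_iff, ← (Pi.basisFun k (Fin (N+1))).span_eq, Submodule.span_le]
    rintro x ⟨i, rfl⟩
    rw [Pi.basisFun_apply]
    exact himg i
  have hle2 : Module.finrank k
      (Submodule.map Φ (Submodule.span k (G : Set (Coch k Q R m)))) ≤ N := by
    refine le_trans (Submodule.finrank_map_le Φ _) ?_
    simpa [Set.finrank] using finrank_span_finset_le_card G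
  rw [htop, finrank_top, Module.finrank_fin_fun] at hle2
  omega

end AuxContra
section AuxMainD

variable {Q : Quiv} {R : Set (Q.A × Q.A)} {k : Type} [Field k]

/-- If there is a cocomplete cycle, `HH⁰` is infinite-dimensional. -/
lemma notFinDim0 (hg : IsGentle Q R) (hex : ∃ p : PathDat Q, Cocomplete Q R p) :
    ¬ CohomFinDim k Q R 0 := by
  classical
  obtain ⟨p, hp⟩ := hex
  have hm : 1 ≤ p.2.length := List.length_pos_iff.mpr (coc_ne_nil hp)
  set q : ℕ → PathDat Q := fun n => (p.1, powL p.2 (n+1)) with hqdef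
  have hq : ∀ n, Cocomplete Q R (q n) := fun n => coc_powP hp (by omega)
  have hlen : ∀ n, (q n).2.length = (n+1) * p.2.length := fun n => powL_length _ _
  set z : ℕ → Coch k Q R 0 := fun n =>
    ∑ w ∈ (orb_fin (q n)).toFinset, bv k Q R 0 ((w.1, ([] : List Q.A)), w) with hzdef
  set φ : ℕ → (Coch k Q R 0 →ₗ[k] k) := fun n =>
    coeffAt k Q R 0 (((q n).1, ([] : List Q.A)), q n) with hφdef
  refine contra z φ ?_ ?_ ?_
  · intro n
    show z n ∈ LinearMap.ker (dLin k Q R 0)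
    rw [LinearMap.mem_ker, hzdef, map_sum]
    have hterm : ∀ w ∈ (orb_fin (q n)).toFinset,
        dLin k Q R 0 (bv k Q R 0 ((w.1, ([] : List Q.A)), w))
          = bv k Q R 1 (nextExt Q w) - bv k Q R 1 (nextExt Q (rotP Q w)) := by
      intro w hw
      have hcw := orb_coc (hq n) ((Set.Finite.mem_toFinset _).mp hw)
      rw [dLin_bv (zmem hcw), dB_coc hg hcw]
    rw [Finset.sum_congr rfl hterm, Finset.sum_sub_distrib,
      sum_rot_orbit (hq n) (fun w => bv k Q R 1 (nextExt Q w)), sub_self]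
  · intro n wv hwv
    have h0 : wv = 0 := by
      have : wv ∈ (⊥ : Submodule k (Coch k Q R 0)) := hwv
      simpa using this
    rw [h0, map_zero]
  · intro n n'
    rw [hφdef, hzdef]
    simp only
    rw [map_sum]
    have hco : ∀ w, coeffAt k Q R 0 (((q n).1, ([] : List Q.A)), q n)
        (bv k Q R 0 ((w.1, ([] : List Q.A)), w))
        = if GBmem Q R 0 ((w.1, ([] : List Q.A)), w) ∧
            (((q n).1, ([] : List Q.A)), q n) = ((w.1, ([] : List Q.A)), w)
          then (1:k) else 0 := fun w => coeffAt_bv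
    by_cases h : n = n'
    · subst h
      rw [Finset.sum_eq_single_of_mem (q n)
        ((Set.Finite.mem_toFinset _).mpr (orb_self (q n))) ?_]
      · rw [hco, if_pos ⟨zmem (hq n), rfl⟩, if_pos rfl]
      · intro w hw hne
        rw [hco, if_neg]
        rintro ⟨-, heq⟩
        exact hne (congrArg (fun y => y.2) heq).symm
    · rw [if_neg h, Finset.sum_eq_zero]
      intro w hw
      rw [hco, if_neg]
      rintro ⟨-, heq⟩
      have hweq : q n = w := congrArg (fun y => y.2) heq
      have h1 : w.2.length = (n'+1) * p.2.length :=
        (orb_len ((Set.Finite.mem_toFinset _).mp hw)).trans (hlen n')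
      rw [← hweq, hlen n] at h1
      have := Nat.eq_of_mul_eq_mul_right (by omega : 0 < p.2.length) h1
      omega

end AuxMainD
section AuxABC

variable {Q : Quiv} {R : Set (Q.A × Q.A)} {k : Type} [Field k]

/-- If `B` is finite, each cochain space is finite dimensional, hence so is
each cohomology. -/
lemma finDim_of_finite (hB : {p : PathDat Q | InB Q R p}.Finite) (m : ℕ) :
    CohomFinDim k Q R m := by
  classical
  have hGB : {x : PathDat Q × PathDat Q | GBmem Q R m x}.Finite := by
    refine Set.Finite.subset ((pathDat_len_fin (Q := Q) m).prod hB) ?_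
    rintro ⟨x1, x2⟩ hx
    exact ⟨hx.2.1, hx.2.2.1⟩
  haveI : Finite (GB Q R m) := hGB.to_subtype
  haveI : Module.Finite k (Coch k Q R m) := by infer_instance
  obtain ⟨G, hGspan⟩ := IsNoetherian.noetherian (cocSp k Q R m)
  refine ⟨G, ?_, ?_⟩
  · intro x hx
    rw [← hGspan]
    exact Submodule.subset_span hx
  · rw [← hGspan]
    exact le_sup_right

lemma coc_inB {p : PathDat Q} (hc : Cocomplete Q R p) : InB Q R p :=
  inB_iff'.mpr ⟨coc_goodL hc, coc_head_src hc⟩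

/-- A cocomplete cycle produces infinitely many elements of `B`. -/
lemma infinite_of_coc (hex : ∃ p : PathDat Q, Cocomplete Q R p) :
    ¬ {p : PathDat Q | InB Q R p}.Finite := by
  obtain ⟨p, hp⟩ := hex
  have hm : 1 ≤ p.2.length := List.length_pos_iff.mpr (coc_ne_nil hp)
  intro hfin
  refine Set.Finite.not_infinite hfin ?_
  refine Set.infinite_of_injective_forall_mem
    (f := fun n : ℕ => ((p.1, powL p.2 (n+1)) : PathDat Q)) ?_ ?_
  · intro n n' h
    have h2 := congrArg (fun y : PathDat Q => y.2.length) h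
    simp only [powL_length] at h2
    have h3 : n + 1 = n' + 1 := Nat.eq_of_mul_eq_mul_right (by omega) h2
    omega
  · intro n
    exact coc_inB (coc_powP hp (by omega : 1 ≤ n + 1))

/-- If `B` is infinite, there is a cocomplete cycle. -/
lemma coc_of_infinite (hinf : ¬ {p : PathDat Q | InB Q R p}.Finite) :
    ∃ p : PathDat Q, Cocomplete Q R p := by
  classical
  set N := Fintype.card Q.A with hN
  -- there is a long element of B
  have hlong : ∃ p : PathDat Q, InB Q R p ∧ N < p.2.length := by
    by_contra hcon
    push_neg at hcon
    apply hinf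
    have hsub : {p : PathDat Q | InB Q R p} ⊆
        ⋃ j ∈ {i : ℕ | i ≤ N}, {p : PathDat Q | p.2.length = j} := by
      intro p hp
      exact Set.mem_biUnion (hcon p hp) rfl
    exact ((Set.finite_le_nat N).biUnion (fun j _ => pathDat_len_fin j)).subset hsub
  obtain ⟨p, hpB, hplen⟩ := hlong
  set l := p.2 with hl
  have hgood : GoodL Q R l := (inB_iff'.mp hpB).1
  -- a repeated arrow
  have hnd : ¬ l.Nodup := fun hn => absurd hn.length_le_card (by omega)
  rw [List.nodup_iff_injective_get] at hnd
  rw [Function.not_injective_iff] at hnd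
  obtain ⟨i0, j0, hget, hne0⟩ := hnd
  -- wlog i < j
  obtain ⟨i, j, hij, hgep⟩ : ∃ i j : Fin l.length, i < j ∧ l.get i = l.get j := by
    rcases lt_or_gt_of_ne hne0 with h | h
    · exact ⟨i0, j0, h, hget⟩
    · exact ⟨j0, i0, h, hget.symm⟩
  have hi : (i : ℕ) < l.length := i.isLt
  have hj : (j : ℕ) < l.length := j.isLt
  have hijn : (i : ℕ) < (j : ℕ) := hij
  have hgetn : l[(i : ℕ)] = l[(j : ℕ)] := by
    simpa [List.get_eq_getElem] using hgep
  set t : List Q.A := (l.drop i).take (j - i) with ht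
  -- t starts with l[i]
  have hdropi : l.drop (i : ℕ) = l[(i:ℕ)] :: l.drop ((i:ℕ)+1) := List.drop_eq_getElem_cons hi
  obtain ⟨d, hdv⟩ : ∃ d, (j : ℕ) - (i : ℕ) = d + 1 := ⟨(j:ℕ) - (i:ℕ) - 1, by omega⟩
  have htcons : t = l[(i:ℕ)] :: (l.drop ((i:ℕ)+1)).take d := by
    rw [ht, hdropi, hdv, List.take_succ_cons]
  have htne : t ≠ [] := by rw [htcons]; simp
  have hthead : t.head? = some l[(i:ℕ)] := by rw [htcons]; rfl
  -- t' = t ++ [l[i]]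
  have hdrop_get : (l.drop (i:ℕ))[(j:ℕ) - (i:ℕ)]? = some l[(j:ℕ)] := by
    rw [List.getElem?_drop]
    rw [List.getElem?_eq_getElem (by omega : (i:ℕ) + ((j:ℕ) - (i:ℕ)) < l.length)]
    congr 1
    congr 1
    omega
  have ht' : (l.drop (i:ℕ)).take (((j:ℕ) - (i:ℕ)) + 1) = t ++ [l[(i:ℕ)]] := by
    rw [List.take_succ, hdrop_get, ← ht, hgetn]
    rfl
  have hinfix : (l.drop (i:ℕ)).take (((j:ℕ) - (i:ℕ)) + 1) <:+: l :=
    (List.take_prefix _ _).isInfix.trans (List.drop_suffix _ _).isInfix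
  have hgood' : GoodL Q R (t ++ [l[(i:ℕ)]]) := by
    rw [← ht']
    exact goodL_infix hgood hinfix
  have hpow : ∀ n, GoodL Q R (powL t n) := fun n =>
    ⟨chain'_powL hgood'.1 hthead n, chain'_powL hgood'.2 hthead n⟩
  -- the cocomplete cycle
  refine ⟨(Q.src l[(i:ℕ)], t), ?_, ?_⟩
  · refine ⟨⟨hgood'.1.prefix (List.prefix_append _ _), ?_⟩, htne, ?_⟩
    · intro x hx
      rw [hthead] at hx
      obtain rfl : l[(i:ℕ)] = x := by simpa using hx
      rfl
    · show Q.src l[(i:ℕ)] = ptgt Q (Q.src l[(i:ℕ)], t)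
      have hgl : t.getLast? = some (t.getLast htne) := List.getLast?_eq_getLast htne
      rw [ptgt_some (p := (Q.src l[(i:ℕ)], t)) hgl]
      exact ((List.isChain_append.mp hgood'.1).2.2 _ hgl _ rfl).symm
  · show InB Q R (Q.src l[(i:ℕ)], powL t 2)
    have h2 : powL t 2 = t ++ (t ++ []) := rfl
    rw [inB_iff]
    refine ⟨hpow 2, ?_⟩
    intro x hx
    rw [h2, List.head?_append, hthead] at hx
    obtain rfl : l[(i:ℕ)] = x := by simpa using hx
    rfl

end AuxABC
section AuxDegreeOne

variable {Q : Quiv} {R : Set (Q.A × Q.A)} {k : Type} [Field k]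

lemma extL_pair {B : PathDat Q} (hB : Cocomplete Q R B) :
    ((extL Q (B.2.head (coc_ne_nil hB)) (B.1, ([] : List Q.A)),
      extL Q (B.2.head (coc_ne_nil hB)) B) : PathDat Q × PathDat Q)
      = nextExt Q B := by
  obtain ⟨a, t, hBl⟩ : ∃ a t, B.2 = a :: t := by
    cases hx : B.2 with
    | nil => exact absurd hx (coc_ne_nil hB)
    | cons a t => exact ⟨a, t, rfl⟩
  have hhd : B.2.head (coc_ne_nil hB) = a := by simp [hBl]
  rw [nextExt_eq hBl, hhd]
  unfold extL
  rw [← hBl]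
  rfl

lemma extR_pair {B : PathDat Q} (hB : Cocomplete Q R B) :
    ((extR Q (B.2.getLast (coc_ne_nil hB)) (B.1, ([] : List Q.A)),
      extR Q (B.2.getLast (coc_ne_nil hB)) B) : PathDat Q × PathDat Q)
      = nextExt Q (rotP Q B) := by
  have hne := coc_ne_nil hB
  set aL := B.2.getLast hne with haL
  have hgl : B.2.getLast? = some aL := List.getLast?_eq_getLast hne
  have hrot : rotP Q B = (Q.src aL, aL :: B.2.dropLast) := rotP_eq hgl
  rw [nextExt_eq (w := rotP Q B) (by rw [hrot])]
  unfold extR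
  rw [hrot]
  refine Prod.ext rfl (Prod.ext rfl ?_)
  show aL :: B.2 = (aL :: B.2.dropLast) ++ [aL]
  conv_lhs => rw [← List.dropLast_append_getLast hne, ← haL]
  simp

lemma nextExt_extL_facts {w : PathDat Q} (hw : w.2 ≠ []) {vv : Q.V} {b : Q.A}
    {B : PathDat Q}
    (h : nextExt Q w = (extL Q b (vv, ([] : List Q.A)), extL Q b B)) :
    w.1 = vv ∧ w.1 = B.1 ∧ w.2 = B.2 ∧ w.2.head? = some b := by
  obtain ⟨hd, s, hwl⟩ : ∃ a t, w.2 = a :: t := by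
    cases hx : w.2 with
    | nil => exact absurd hx hw
    | cons a t => exact ⟨a, t, rfl⟩
  rw [nextExt_eq hwl] at h
  unfold extL at h
  simp only [Prod.mk.injEq, List.nil_append] at h
  obtain ⟨⟨hv1, hb1⟩, hv2, hl2⟩ := h
  obtain rfl : hd = b := by simpa using hb1
  have hl3 : w.2 = B.2 := by
    apply List.append_cancel_right (bs := [hd])
    rw [hwl]
    exact hl2
  exact ⟨hv1, hv2, hl3, by rw [hwl]; rfl⟩

lemma nextExt_extR_facts {w : PathDat Q} (hw : w.2 ≠ []) {vv : Q.V} {c : Q.A}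
    {B : PathDat Q}
    (h : nextExt Q w = (extR Q c (vv, ([] : List Q.A)), extR Q c B)) :
    B.2 ≠ [] ∧ B.2.getLast? = some c ∧ rotP Q B = w := by
  obtain ⟨hd, s, hwl⟩ : ∃ a t, w.2 = a :: t := by
    cases hx : w.2 with
    | nil => exact absurd hx hw
    | cons a t => exact ⟨a, t, rfl⟩
  rw [nextExt_eq hwl] at h
  unfold extR at h
  simp only [Prod.mk.injEq] at h
  obtain ⟨⟨hv1, hc1⟩, hv2, hl2⟩ := h
  obtain rfl : hd = c := by simpa using hc1
  -- hl2 : (hd :: s) ++ [hd] = hd :: B.2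
  have hB2 : B.2 = s ++ [hd] := by
    have := hl2
    simp only [List.cons_append, List.cons.injEq, true_and] at this
    exact this.symm
  have hne : B.2 ≠ [] := by rw [hB2]; simp
  have hgl : B.2.getLast? = some hd := by rw [hB2]; exact List.getLast?_concat
  refine ⟨hne, hgl, ?_⟩
  rw [rotP_eq hgl, hB2, List.dropLast_concat, ← hwl, ← hv1]

/-- Degree-1 cocycle: the basis vector at `nextExt` of a cocomplete cycle. -/
lemma dB1_zero {y : PathDat Q × PathDat Q} (hy : GBmem Q R 1 y) {a : Q.A}
    (h1 : y.1.2 = [a]) (h2 : y.2.2.head? = some a) (h3 : y.2.2.getLast? = some a) :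
    dB k Q R 1 ⟨y, hy⟩ = 0 := by
  classical
  unfold dB
  dsimp only
  have hpos : ∀ b : Q.A,
      (if h : GBmem Q R 2 (extL Q b y.1, extL Q b y.2) then
        Finsupp.single (⟨(extL Q b y.1, extL Q b y.2), h⟩ : GB Q R 2) (1:k) else 0) = 0 := by
    intro b
    rw [dif_neg]
    intro hmem
    have hInG : (y.1.2 ++ [b]).Chain' (fun a b => (a, b) ∈ R) := hmem.1.2
    have hInB : InB Q R (y.2.1, y.2.2 ++ [b]) := hmem.2.2.1
    rw [inB_iff] at hInB
    have hmemR : (a, b) ∈ R := by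
      refine (List.isChain_append.mp hInG).2.2 a ?_ b rfl
      rw [h1]
      rfl
    have hnotR : (a, b) ∉ R := (List.isChain_append.mp hInB.1.2).2.2 a h3 b rfl
    exact hnotR hmemR
  have hneg : ∀ c : Q.A,
      (if h : Q.tgt c = psrc Q y.1 ∧ GBmem Q R 2 (extR Q c y.1, extR Q c y.2) then
        Finsupp.single (⟨(extR Q c y.1, extR Q c y.2), h.2⟩ : GB Q R 2) (1:k) else 0) = 0 := by
    intro c
    rw [dif_neg]
    rintro ⟨-, hmem⟩
    have hInG : (c :: y.1.2).Chain' (fun a b => (a, b) ∈ R) := hmem.1.2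
    have hInB : InB Q R (Q.src c, c :: y.2.2) := hmem.2.2.1
    rw [inB_iff] at hInB
    have hmemR : (c, a) ∈ R := by
      rw [h1] at hInG
      exact (List.isChain_cons_cons.mp hInG).1
    have hnotR : (c, a) ∉ R := by
      have := hInB.1.2
      rw [← List.cons_head?_tail h2] at this
      exact (List.isChain_cons_cons.mp this).1
    exact hnotR hmemR
  rw [Finset.sum_congr rfl (fun b _ => hpos b), Finset.sum_congr rfl (fun c _ => hneg c)]
  simp

end AuxDegreeOne
section AuxPhiOne

variable {Q : Quiv} {R : Set (Q.A × Q.A)} {k : Type} [Field k]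

/-- The degree-1 functional attached to the orbit of `q` kills coboundaries. -/
lemma phi1_dB {q : PathDat Q} (hq : Cocomplete Q R q) (x : GB Q R 0) :
    (∑ w ∈ (orb_fin q).toFinset, coeffAt k Q R 1 (nextExt Q w)) (dB k Q R 0 x) = 0 := by
  classical
  obtain ⟨⟨⟨vv, g⟩, B⟩, hx⟩ := x
  have hg0 : g = [] := List.length_eq_zero_iff.mp hx.2.1
  subst hg0
  have hvv : vv = B.1 := hx.2.2.2.1
  subst hvv
  have hOkB : Ok Q B := hx.2.2.1.1
  have htgtB : ptgt Q B = B.1 := ((hx.2.2.2.2 : ptgt Q ((B.1, [])) = ptgt Q B).symm : _)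
  have hwne : ∀ w ∈ OrbS Q q, w.2 ≠ [] := fun w hw => coc_ne_nil (orb_coc hq hw)
  set T := (orb_fin q).toFinset with hT
  have hTmem : ∀ w, w ∈ T ↔ w ∈ OrbS Q q := fun w => Set.Finite.mem_toFinset _
  unfold dB
  dsimp only
  rw [pow_zero, one_smul, map_sub, map_sum, map_sum]
  have hPos : ∀ b : Q.A,
      (∑ w ∈ T, coeffAt k Q R 1 (nextExt Q w))
        (if h : GBmem Q R (0+1) (extL Q b (B.1, ([] : List Q.A)), extL Q b B) then
          Finsupp.single (⟨(extL Q b (B.1, ([] : List Q.A)), extL Q b B), h⟩ : GB Q R (0+1))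
            (1:k) else 0)
      = if B ∈ OrbS Q q ∧ B.2.head? = some b then (1:k) else 0 := by
    intro b
    rw [LinearMap.sum_apply]
    rw [Finset.sum_congr rfl (fun w _ => coeffAt_dite (nextExt Q w) _ _ (fun h => h))]
    by_cases hB : B ∈ OrbS Q q
    · have hBc := orb_coc hq hB
      have hne := coc_ne_nil hBc
      have hh : B.2.head? = some (B.2.head hne) := List.head?_eq_head hne
      by_cases hb : b = B.2.head hne
      · subst hb
        rw [if_pos ⟨hB, hh⟩]
        rw [Finset.sum_eq_single_of_mem B ((hTmem B).mpr hB) ?_]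
        · rw [if_pos ⟨(by rw [extL_pair hBc]; exact nextExt_mem hBc), (extL_pair hBc).symm⟩]
        · intro w hw hne'
          rw [if_neg]
          rintro ⟨-, hEq⟩
          rw [extL_pair hBc] at hEq
          exact hne' (nextExt_inj (hwne w ((hTmem w).mp hw)) hne hEq)
      · rw [if_neg (fun hcon => hb (by
          rw [hh] at hcon
          exact (Option.some.inj hcon.2).symm))]
        refine Finset.sum_eq_zero (fun w hw => ?_)
        rw [if_neg]
        rintro ⟨-, hEq⟩
        obtain ⟨-, -, hl, hhd⟩ := nextExt_extL_facts (hwne w ((hTmem w).mp hw)) hEq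
        rw [hl, hh] at hhd
        exact hb (Option.some.inj hhd).symm
    · rw [if_neg (fun hcon => hB hcon.1)]
      refine Finset.sum_eq_zero (fun w hw => ?_)
      rw [if_neg]
      rintro ⟨-, hEq⟩
      obtain ⟨-, hv, hl, -⟩ := nextExt_extL_facts (hwne w ((hTmem w).mp hw)) hEq
      refine hB ?_
      have : w = B := Prod.ext hv hl
      rw [← this]
      exact (hTmem w).mp hw
  have hNeg : ∀ c : Q.A,
      (∑ w ∈ T, coeffAt k Q R 1 (nextExt Q w))
        (if h : Q.tgt c = psrc Q ((B.1, ([] : List Q.A)) : PathDat Q) ∧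
            GBmem Q R (0+1) (extR Q c (B.1, ([] : List Q.A)), extR Q c B) then
          Finsupp.single (⟨(extR Q c (B.1, ([] : List Q.A)), extR Q c B), h.2⟩ : GB Q R (0+1))
            (1:k) else 0)
      = if B ∈ OrbS Q q ∧ B.2.getLast? = some c then (1:k) else 0 := by
    intro c
    rw [LinearMap.sum_apply]
    rw [Finset.sum_congr rfl (fun w _ => coeffAt_dite (nextExt Q w) _ _ (fun h => h.2))]
    by_cases hB : B ∈ OrbS Q q
    · have hBc := orb_coc hq hB
      have hne := coc_ne_nil hBc
      have hgl : B.2.getLast? = some (B.2.getLast hne) := List.getLast?_eq_getLast hne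
      by_cases hc : c = B.2.getLast hne
      · subst hc
        rw [if_pos ⟨hB, hgl⟩]
        rw [Finset.sum_eq_single_of_mem (rotP Q B) ((hTmem _).mpr (orb_rot hB)) ?_]
        · rw [if_pos ⟨⟨coc_tgt_last hBc,
            (by rw [extR_pair hBc]; exact nextExt_mem (coc_rot hBc))⟩,
            (extR_pair hBc).symm⟩]
        · intro w hw hne'
          rw [if_neg]
          rintro ⟨-, hEq⟩
          obtain ⟨-, -, hrw⟩ := nextExt_extR_facts (hwne w ((hTmem w).mp hw)) hEq
          exact hne' hrw.symm
      · rw [if_neg (fun hcon => hc (by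
          rw [hgl] at hcon
          exact (Option.some.inj hcon.2).symm))]
        refine Finset.sum_eq_zero (fun w hw => ?_)
        rw [if_neg]
        rintro ⟨-, hEq⟩
        obtain ⟨-, hgl', -⟩ := nextExt_extR_facts (hwne w ((hTmem w).mp hw)) hEq
        rw [hgl] at hgl'
        exact hc (Option.some.inj hgl').symm
    · rw [if_neg (fun hcon => hB hcon.1)]
      refine Finset.sum_eq_zero (fun w hw => ?_)
      rw [if_neg]
      rintro ⟨-, hEq⟩
      obtain ⟨hBne, -, hrw⟩ := nextExt_extR_facts (hwne w ((hTmem w).mp hw)) hEq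
      refine hB (orb_pre hq hBne hOkB.2 ?_)
      rw [hrw]
      exact (hTmem w).mp hw
  rw [Finset.sum_congr rfl (fun b _ => hPos b), Finset.sum_congr rfl (fun c _ => hNeg c)]
  by_cases hB : B ∈ OrbS Q q
  · have hBc := orb_coc hq hB
    have hne := coc_ne_nil hBc
    have hh : B.2.head? = some (B.2.head hne) := List.head?_eq_head hne
    have hgl : B.2.getLast? = some (B.2.getLast hne) := List.getLast?_eq_getLast hne
    rw [Fintype.sum_eq_single (B.2.head hne) (fun b hb => by
      rw [if_neg]
      rintro ⟨-, hcon⟩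
      rw [hh] at hcon
      exact hb (Option.some.inj hcon).symm)]
    rw [Fintype.sum_eq_single (B.2.getLast hne) (fun c hc => by
      rw [if_neg]
      rintro ⟨-, hcon⟩
      rw [hgl] at hcon
      exact hc (Option.some.inj hcon).symm)]
    rw [if_pos ⟨hB, hh⟩, if_pos ⟨hB, hgl⟩, sub_self]
  · rw [Finset.sum_eq_zero (fun b _ => if_neg (fun hcon => hB hcon.1)),
      Finset.sum_eq_zero (fun c _ => if_neg (fun hcon => hB hcon.1)), sub_self]

end AuxPhiOne
section AuxMainE

variable {Q : Quiv} {R : Set (Q.A × Q.A)} {k : Type} [Field k]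

/-- If there is a cocomplete cycle, `HH¹` is infinite-dimensional. -/
lemma notFinDim1 (hex : ∃ p : PathDat Q, Cocomplete Q R p) :
    ¬ CohomFinDim k Q R 1 := by
  classical
  obtain ⟨p, hp⟩ := hex
  have hm : 1 ≤ p.2.length := List.length_pos_iff.mpr (coc_ne_nil hp)
  set q : ℕ → PathDat Q := fun n => (p.1, powL p.2 (n+1)) with hqdef
  have hq : ∀ n, Cocomplete Q R (q n) := fun n => coc_powP hp (by omega)
  have hlen : ∀ n, (q n).2.length = (n+1) * p.2.length := fun n => powL_length _ _
  set z : ℕ → Coch k Q R 1 := fun n => bv k Q R 1 (nextExt Q (q n)) with hzdef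
  set φ : ℕ → (Coch k Q R 1 →ₗ[k] k) := fun n =>
    ∑ w ∈ (orb_fin (q n)).toFinset, coeffAt k Q R 1 (nextExt Q w) with hφdef
  refine contra z φ ?_ ?_ ?_
  · intro n
    show z n ∈ LinearMap.ker (dLin k Q R 1)
    rw [LinearMap.mem_ker, hzdef]
    simp only
    rw [dLin_bv (nextExt_mem (hq n))]
    obtain ⟨a, t, hql⟩ : ∃ a t, (q n).2 = a :: t := by
      cases hx : (q n).2 with
      | nil => exact absurd hx (coc_ne_nil (hq n))
      | cons a t => exact ⟨a, t, rfl⟩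
    refine dB1_zero (nextExt_mem (hq n)) (a := a) ?_ ?_ ?_ <;>
      rw [nextExt_eq hql] <;>
        first
          | rfl
          | exact List.getLast?_concat
  · intro n wv hwv
    obtain ⟨F, rfl⟩ : ∃ F, dLin k Q R 0 F = wv := by
      have : wv ∈ LinearMap.range (dLin k Q R 0) := hwv
      exact this
    show φ n (dLin k Q R 0 F) = 0
    unfold dLin
    rw [Finsupp.linearCombination_apply, map_finsuppSum]
    rw [Finsupp.sum]
    refine Finset.sum_eq_zero (fun x hx => ?_)
    rw [map_smul]
    rw [hφdef]
    simp only
    rw [phi1_dB (hq n) x, smul_zero]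
  · intro n n'
    rw [hφdef, hzdef]
    simp only
    rw [LinearMap.sum_apply]
    have hco : ∀ w, coeffAt k Q R 1 (nextExt Q w) (bv k Q R 1 (nextExt Q (q n')))
        = if GBmem Q R 1 (nextExt Q (q n')) ∧ nextExt Q w = nextExt Q (q n')
          then (1:k) else 0 := fun w => coeffAt_bv
    by_cases h : n = n'
    · subst h
      rw [Finset.sum_eq_single_of_mem (q n)
        ((Set.Finite.mem_toFinset _).mpr (orb_self (q n))) ?_, if_pos rfl]
      · rw [hco, if_pos ⟨nextExt_mem (hq n), rfl⟩]
      · intro w hw hne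
        rw [hco, if_neg]
        rintro ⟨-, heq⟩
        exact hne (nextExt_inj (coc_ne_nil (orb_coc (hq n)
          ((Set.Finite.mem_toFinset _).mp hw))) (coc_ne_nil (hq n)) heq)
    · rw [if_neg h, Finset.sum_eq_zero]
      intro w hw
      rw [hco, if_neg]
      rintro ⟨-, heq⟩
      have hw' := (Set.Finite.mem_toFinset _).mp hw
      have hweq : w = q n' := nextExt_inj (coc_ne_nil (orb_coc (hq n) hw'))
        (coc_ne_nil (hq n')) heq
      have h1 : w.2.length = (n+1) * p.2.length := (orb_len hw').trans (hlen n)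
      rw [hweq, hlen n'] at h1
      have := Nat.eq_of_mul_eq_mul_right (by omega : 0 < p.2.length) h1
      omega

end AuxMainE
/-- For a gentle presentation `(Q, R)`, the following are
equivalent: `B` is finite (i.e. `kQ/⟨R⟩` is finite-dimensional), `HH⁰` is
finite-dimensional, `HH¹` is finite-dimensional, and there is no cocomplete
cycle in `(Q, R)`. Moreover, when these hold, `HH^m` is finite-dimensional for
every `m ≥ 0`. -/
theorem finiteness_of_cohomology (k : Type) [Field k] (Q : Quiv)
    (R : Set (Q.A × Q.A)) (hg : IsGentle Q R) :
    ({p : PathDat Q | InB Q R p}.Finite ↔ CohomFinDim k Q R 0) ∧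
    ({p : PathDat Q | InB Q R p}.Finite ↔ CohomFinDim k Q R 1) ∧
    ({p : PathDat Q | InB Q R p}.Finite ↔ ¬∃ p : PathDat Q, Cocomplete Q R p) ∧
    ({p : PathDat Q | InB Q R p}.Finite → ∀ m : ℕ, CohomFinDim k Q R m) := by
  refine ⟨⟨fun h => finDim_of_finite h 0, ?_⟩, ⟨fun h => finDim_of_finite h 1, ?_⟩,
    ⟨?_, ?_⟩, fun h m => finDim_of_finite h m⟩
  · intro h0
    by_contra hinf
    exact notFinDim0 hg (coc_of_infinite hinf) h0
  · intro h1
    by_contra hinf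
    exact notFinDim1 (coc_of_infinite hinf) h1
  · intro hfin hex
    exact infinite_of_coc hex hfin
  · intro hno
    by_contra hinf
    exact hno (coc_of_infinite hinf)

end GentleTT
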